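/- Let E = g₁^{x₁}⋯g_l^{x_l} be an exponential expression over a group G with variable set X. In G × ℤ^l, define h_x = (1, e_x) where e_x = Σ_{i: xᵢ = x} eᵢ, and hᵢ = (gᵢ, -eᵢ). Then for g ∈ G, there exists ν: X → ℤ with g₁^{ν(x₁)}⋯g_l^{ν(x_l)} = g if and only if (g, 0) ∈ Π_{x ∈ X} ⟨h_x⟩ · Π_{i=1}^l ⟨hᵢ⟩. -/

import Mathlib

private lemma prod_fst' {M N : Type*} [Monoid M] [Monoid N] (L : List (M × N)) :
    L.prod.1 = (L.map Prod.fst).prod := map_list_prod (MonoidHom.fst M N) L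

private lemma prod_snd' {M N : Type*} [Monoid M] [Monoid N] (L : List (M × N)) :
    L.prod.2 = (L.map Prod.snd).prod := map_list_prod (MonoidHom.snd M N) L

private lemma exp_key {G : Type*} [Group G] (l p : ℕ)
    (g : Fin l → G) (var : Fin l → Fin p) (a : Fin p → ℤ) (b : Fin l → ℤ) :
    ((List.ofFn fun x : Fin p =>
          (((1 : G), Multiplicative.ofAdd
              (∑ i ∈ Finset.univ.filter (fun i : Fin l => var i = x),
                Pi.single i (1 : ℤ))) : G × Multiplicative (Fin l → ℤ)) ^ a x).prod *
      (List.ofFn fun i : Fin l =>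
          ((g i, Multiplicative.ofAdd (-(Pi.single i (1 : ℤ)))) :
            G × Multiplicative (Fin l → ℤ)) ^ b i).prod) =
    ((List.ofFn fun i : Fin l => g i ^ b i).prod,
      Multiplicative.ofAdd (fun j => a (var j) - b j)) := by
  refine Prod.ext ?_ ?_
  · simp only [Prod.fst_mul, prod_fst', List.map_ofFn]
    simp [Function.comp_def]
  · simp only [Prod.snd_mul, prod_snd', List.map_ofFn]
    simp only [Function.comp_def]
    rw [List.prod_ofFn, List.prod_ofFn]
    apply Multiplicative.toAdd.injective
    funext j
    simp [toAdd_zpow, Finset.sum_apply, Pi.single_apply, sub_eq_add_neg, mul_comm]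
    omega

/-- Solvability of an exponential expression `E = g₁^{x₁}⋯g_l^{x_l}` over `G` is
equivalent to membership of `(g, 0)` in a product of cyclic subgroups of `G × ℤˡ`,
generated by `h_x = (1, e_x)` and `hᵢ = (gᵢ, -eᵢ)`. -/
theorem exp_expr_iff_prod_cyclic {G : Type*} [Group G] (l p : ℕ)
    (g : Fin l → G) (var : Fin l → Fin p) (g₀ : G) :
    (∃ ν : Fin p → ℤ, (List.ofFn fun i : Fin l => g i ^ ν (var i)).prod = g₀) ↔
    (∃ (a : Fin p → ℤ) (b : Fin l → ℤ),
      (List.ofFn fun x : Fin p =>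
          (((1 : G), Multiplicative.ofAdd
              (∑ i ∈ Finset.univ.filter (fun i : Fin l => var i = x),
                Pi.single i (1 : ℤ))) : G × Multiplicative (Fin l → ℤ)) ^ a x).prod *
      (List.ofFn fun i : Fin l =>
          ((g i, Multiplicative.ofAdd (-(Pi.single i (1 : ℤ)))) :
            G × Multiplicative (Fin l → ℤ)) ^ b i).prod =
      (g₀, 1)) := by
  constructor
  · rintro ⟨ν, hν⟩
    refine ⟨ν, fun i => ν (var i), ?_⟩
    rw [exp_key]
    refine Prod.ext (by simpa using hν) ?_
    simp
    rfl
  · rintro ⟨a, b, hab⟩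
    rw [exp_key, Prod.ext_iff] at hab
    obtain ⟨h1, h2⟩ := hab
    simp only at h1 h2
    have h2' : (fun j => a (var j) - b j) = (fun _ => (0 : ℤ)) :=
      Multiplicative.ofAdd.injective (by simpa [Pi.zero_def] using h2)
    have hb : ∀ j, b j = a (var j) := fun j => by
      have := congrFun h2' j
      simp only [sub_eq_zero] at this
      exact this.symm
    simp only [hb] at h1
    exact ⟨a, h1⟩
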